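/- The maximum in the optimistic operator max over {P̃ : P̃ probability vector, ‖P̃ − P̂‖₁ ≤ ε_p} of ∑_i p̃_i·U_i is attained by the vector constructed as follows: increase the coordinate with largest U_i by min(ε_p/2, 1 − p̂_i), then decrease coordinates in increasing order of U_i (setting them to 0) until the total sums to 1; this procedure yields a valid probability vector within L1 distance ε_p of P̂ achieving the maximum. -/

import Mathlib

/-- The reduction loop of Algorithm 1 (lines 18–24): processing indices in the given order,
each processed coordinate is set to `max 0 (1 - (sum of the other coordinates))`. -/
def squeeze {m : ℕ} (q : Fin m → ℝ) : List (Fin m) → (Fin m → ℝ)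
  | [] => q
  | i :: rest =>
      squeeze (Function.update q i (max 0 (1 - ∑ k ∈ Finset.univ.erase i, q k))) rest

private lemma squeeze_id {m : ℕ} (l : List (Fin m)) (q : Fin m → ℝ)
    (h0 : ∀ i, 0 ≤ q i) (h1 : ∑ i, q i = 1) : squeeze q l = q := by
  induction l generalizing q with
  | nil => rfl
  | cons i rest ih =>
      have he : ∑ k ∈ Finset.univ.erase i, q k = 1 - q i := by
        have := Finset.add_sum_erase Finset.univ q (Finset.mem_univ i)
        linarith
      have hupd : Function.update q i (max 0 (1 - ∑ k ∈ Finset.univ.erase i, q k)) = q := by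
        rw [he]
        have h2 : max 0 (1 - (1 - q i)) = q i := by
          rw [max_eq_right (by linarith [h0 i])]; ring
        rw [h2, Function.update_eq_self]
      show squeeze _ rest = q
      rw [hupd]; exact ih q h0 h1

private lemma squeeze_main {m : ℕ} (l : List (Fin m)) (q : Fin m → ℝ)
    (hnd : l.Nodup) (h0 : ∀ i, 0 ≤ q i) (h1 : 1 ≤ ∑ i, q i) :
    (∀ i, 0 ≤ squeeze q l i) ∧ (∀ i, squeeze q l i ≤ q i) ∧ (1 ≤ ∑ i, squeeze q l i) ∧
    (∀ i ∈ l, squeeze q l i = 0 ∨ ∑ k, squeeze q l k = 1) ∧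
    (∀ i, i ∉ l → squeeze q l i = q i) ∧
    (∀ l₁ l₂, l = l₁ ++ l₂ → (∃ b ∈ l₂, squeeze q l b ≠ q b) →
      ∀ a ∈ l₁, squeeze q l a = 0) := by
  induction l generalizing q with
  | nil =>
      refine ⟨h0, fun i => le_refl _, h1, by simp, fun i _ => rfl, ?_⟩
      rintro l₁ l₂ hl ⟨b, hb, hne⟩ a ha
      exact absurd rfl hne
  | cons i rest ih =>
      have hi_not : i ∉ rest := (List.nodup_cons.mp hnd).1
      have hnd' : rest.Nodup := (List.nodup_cons.mp hnd).2
      set E : ℝ := ∑ k ∈ Finset.univ.erase i, q k with hE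
      have hEq : q i + E = ∑ k, q k := Finset.add_sum_erase Finset.univ q (Finset.mem_univ i)
      set q' : Fin m → ℝ := Function.update q i (max 0 (1 - E)) with hq'
      have hq'i : q' i = max 0 (1 - E) := Function.update_self _ _ _
      have hq'ne : ∀ k, k ≠ i → q' k = q k := fun k hk => Function.update_of_ne hk _ _
      have h0' : ∀ k, 0 ≤ q' k := by
        intro k
        rcases eq_or_ne k i with rfl | hk
        · rw [hq'i]; exact le_max_left _ _
        · rw [hq'ne k hk]; exact h0 k
      have hle' : ∀ k, q' k ≤ q k := by
        intro k
        rcases eq_or_ne k i with rfl | hk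
        · rw [hq'i]; exact max_le (h0 k) (by linarith)
        · rw [hq'ne k hk]
      have hsum' : ∑ k, q' k = E + max 0 (1 - E) := by
        rw [hq', Finset.sum_update_of_mem (Finset.mem_univ i), ← Finset.erase_eq, ← hE]
        ring
      have h1' : 1 ≤ ∑ k, q' k := by
        rw [hsum']
        have : 1 - E ≤ max 0 (1 - E) := le_max_right _ _
        linarith
      have hdisj : q' i = 0 ∨ ∑ k, q' k = 1 := by
        rcases le_or_gt (1 - E) 0 with h | h
        · left; rw [hq'i, max_eq_left h]
        · right; rw [hsum', max_eq_right h.le]; ring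
      obtain ⟨A1, A2, A3, A4, A5, A6⟩ := ih q' hnd' h0' h1'
      have hstep : squeeze q (i :: rest) = squeeze q' rest := rfl
      rw [hstep]
      refine ⟨A1, fun k => (A2 k).trans (hle' k), A3, ?_, ?_, ?_⟩
      · intro k hk
        rcases List.mem_cons.mp hk with rfl | hk
        · rcases hdisj with h | h
          · left; exact le_antisymm (h ▸ A2 k) (A1 k)
          · right; rw [squeeze_id rest q' h0' h]; exact h
        · exact A4 k hk
      · intro k hk
        have hk1 : k ≠ i := fun h => hk (h ▸ List.mem_cons_self)
        have hk2 : k ∉ rest := fun h => hk (List.mem_cons_of_mem _ h)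
        rw [A5 k hk2, hq'ne k hk1]
      · rintro l₁ l₂ hl ⟨b, hb, hne⟩ a ha
        cases l₁ with
        | nil => exact absurd ha List.not_mem_nil
        | cons x l₁' =>
            simp only [List.cons_append] at hl
            obtain ⟨hx, hrest⟩ := List.cons_eq_cons.mp hl
            subst hx
            have hbrest : b ∈ rest := hrest ▸ List.mem_append_right _ hb
            have hbne : b ≠ i := fun h => hi_not (h ▸ hbrest)
            have hne' : squeeze q' rest b ≠ q' b := by rw [hq'ne b hbne]; exact hne
            rcases List.mem_cons.mp ha with rfl | ha'
            · rcases hdisj with h | h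
              · exact le_antisymm (h ▸ A2 a) (A1 a)
              · exact absurd (congrFun (squeeze_id rest q' h0' h) b) hne'
            · exact A6 l₁' l₂ hrest ⟨b, hb, hne'⟩ a ha'

private lemma exists_first {α : Type*} (P : α → Prop) (l : List α) (h : ∃ x ∈ l, P x) :
    ∃ l₁ a l₂, l = l₁ ++ a :: l₂ ∧ P a ∧ ∀ b ∈ l₁, ¬ P b := by
  classical
  induction l with
  | nil => simp at h
  | cons x xs ih =>
      by_cases hx : P x
      · exact ⟨[], x, xs, rfl, hx, by simp⟩
      · obtain ⟨y, hy, hPy⟩ := h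
        rcases List.mem_cons.mp hy with rfl | hy'
        · exact absurd hPy hx
        · obtain ⟨l₁, a, l₂, hdec, hPa, hl₁⟩ := ih ⟨y, hy', hPy⟩
          refine ⟨x :: l₁, a, l₂, by rw [hdec, List.cons_append], hPa, ?_⟩
          intro b hb
          rcases List.mem_cons.mp hb with rfl | hb'
          · exact hx
          · exact hl₁ b hb'

private lemma two_max_aux (x : ℝ) : |x| + x = 2 * max x 0 := by
  rcases le_total x 0 with h | h
  · rw [abs_of_nonpos h, max_eq_right h]; ring
  · rw [abs_of_nonneg h, max_eq_left h]; ring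

/-- Correctness of the inner linear-program solver of Algorithm 1: increasing the coordinate
with the largest value `U j` by `min (ε_p/2) (1 - P̂ j)` and then decreasing the coordinates in
increasing order of `U` (setting them to `0`) until the total sums to `1` yields a valid
probability vector within L1 distance `ε_p` of `P̂` maximizing `⟨·, U⟩` over the confidence set. -/
theorem stmt_13 {m : ℕ} (hm : 0 < m) (Phat U : Fin m → ℝ)
    (hP0 : ∀ i, 0 ≤ Phat i) (hP1 : ∑ i, Phat i = 1)
    (εp : ℝ) (hεp : εp ∈ Set.Icc (0 : ℝ) 2)
    (j : Fin m) (hj : ∀ i, U i ≤ U j)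
    (l : List (Fin m)) (hnodup : l.Nodup) (hmem : ∀ i, i ∈ l)
    (hsorted : l.Pairwise (fun i k => U i ≤ U k))
    (q : Fin m → ℝ)
    (hq : q = squeeze (Function.update Phat j (min 1 (Phat j + εp / 2))) l) :
    (∀ i, 0 ≤ q i) ∧ (∑ i, q i) = 1 ∧ (∑ i, |q i - Phat i|) ≤ εp ∧
    ∀ Pt : Fin m → ℝ, (∀ i, 0 ≤ Pt i) → (∑ i, Pt i) = 1 →
      (∑ i, |Pt i - Phat i|) ≤ εp → ∑ i, Pt i * U i ≤ ∑ i, q i * U i := by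
  classical
  obtain ⟨hε0, hε2⟩ := hεp
  set q₀ : Fin m → ℝ := Function.update Phat j (min 1 (Phat j + εp / 2)) with hq₀def
  have hPj1 : Phat j ≤ 1 := by
    calc Phat j ≤ ∑ i, Phat i := Finset.single_le_sum (fun i _ => hP0 i) (Finset.mem_univ j)
      _ = 1 := hP1
  set δ : ℝ := min 1 (Phat j + εp / 2) - Phat j with hδdef
  have hδ0 : 0 ≤ δ := by
    have h := le_min hPj1 (by linarith : Phat j ≤ Phat j + εp / 2)
    rw [hδdef]; linarith
  have hδε : 2 * δ ≤ εp := by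
    have h := min_le_right 1 (Phat j + εp / 2)
    rw [hδdef]; linarith
  have hδ1 : Phat j + δ ≤ 1 := by
    have h := min_le_left 1 (Phat j + εp / 2)
    rw [hδdef]; linarith
  have hq₀j : q₀ j = Phat j + δ := by
    rw [hq₀def, Function.update_self, hδdef]; ring
  have hq₀ne : ∀ i, i ≠ j → q₀ i = Phat i := fun i hi => Function.update_of_ne hi _ _
  have h00 : ∀ i, 0 ≤ q₀ i := by
    intro i; rcases eq_or_ne i j with rfl | hi
    · rw [hq₀j]; linarith [hP0 i]
    · rw [hq₀ne i hi]; exact hP0 i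
  have hPe : ∑ k ∈ Finset.univ.erase j, Phat k = 1 - Phat j := by
    have := Finset.add_sum_erase Finset.univ Phat (Finset.mem_univ j); linarith
  have hsum₀ : ∑ i, q₀ i = 1 + δ := by
    rw [hq₀def, Finset.sum_update_of_mem (Finset.mem_univ j), ← Finset.erase_eq, hPe, hδdef]
    ring
  have h10 : 1 ≤ ∑ i, q₀ i := by rw [hsum₀]; linarith
  obtain ⟨R1, R2, R3, R4, R5, R6⟩ := squeeze_main l q₀ hnodup h00 h10
  subst hq
  set r : Fin m → ℝ := squeeze q₀ l with hrdef
  -- sum = 1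
  have hr1 : ∑ i, r i = 1 := by
    by_contra h
    have hz : ∀ i, r i = 0 := fun i => (R4 i (hmem i)).resolve_right h
    have : ∑ i, r i = 0 := Finset.sum_eq_zero (fun i _ => hz i)
    linarith
  have hre : ∑ k ∈ Finset.univ.erase j, r k = 1 - r j := by
    have := Finset.add_sum_erase Finset.univ r (Finset.mem_univ j); linarith
  -- L1 bound
  have habs : ∑ i, |r i - Phat i| ≤ εp := by
    have hterm : ∀ k ∈ Finset.univ.erase j, |r k - Phat k| = Phat k - r k := by
      intro k hk
      have hkj : k ≠ j := Finset.ne_of_mem_erase hk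
      have : r k ≤ Phat k := by rw [← hq₀ne k hkj]; exact R2 k
      rw [abs_of_nonpos (by linarith)]; ring
    have hsplit : |r j - Phat j| + ∑ k ∈ Finset.univ.erase j, |r k - Phat k|
        = ∑ i, |r i - Phat i| :=
      Finset.add_sum_erase Finset.univ (fun k => |r k - Phat k|) (Finset.mem_univ j)
    have hsum_e : ∑ k ∈ Finset.univ.erase j, |r k - Phat k| = r j - Phat j := by
      rw [Finset.sum_congr rfl hterm, Finset.sum_sub_distrib, hPe, hre]; ring
    have hrj : r j ≤ Phat j + δ := by
      have := R2 j; rw [hq₀j] at this; exact this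
    have h2m := two_max_aux (r j - Phat j)
    have hmx : max (r j - Phat j) 0 ≤ δ := max_le (by linarith) hδ0
    calc ∑ i, |r i - Phat i| = |r j - Phat j| + (r j - Phat j) := by
          rw [← hsplit, hsum_e]
      _ = 2 * max (r j - Phat j) 0 := h2m
      _ ≤ 2 * δ := by linarith
      _ ≤ εp := hδε
  refine ⟨R1, hr1, habs, ?_⟩
  -- optimality
  intro Pt hPt0 hPt1 hPtε
  -- find the pivot p
  have hex : ∃ x ∈ l, 0 < r x := by
    by_contra h
    push_neg at h
    have hz : ∀ i, r i = 0 := fun i => le_antisymm (h i (hmem i)) (R1 i)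
    have : ∑ i, r i = 0 := Finset.sum_eq_zero (fun i _ => hz i)
    linarith
  obtain ⟨l₁, p, l₂, hldec, hp_pos, hl₁0⟩ := exists_first (fun x => 0 < r x) l hex
  have hl₁z : ∀ a ∈ l₁, r a = 0 := fun a ha =>
    le_antisymm (not_lt.mp (hl₁0 a ha)) (R1 a)
  rw [hldec] at hsorted
  have hs := List.pairwise_append.mp hsorted
  have hUl₁ : ∀ a ∈ l₁, U a ≤ U p := fun a ha => hs.2.2 a ha p (List.mem_cons_self)
  have hUl₂ : ∀ b ∈ l₂, U p ≤ U b := fun b hb => (List.pairwise_cons.mp hs.2.1).1 b hb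
  have hF2 : ∀ b ∈ l₂, r b = q₀ b := by
    intro b hb
    by_contra hne
    have : r p = 0 := R6 (l₁ ++ [p]) l₂ (by rw [hldec]; simp) ⟨b, hb, hne⟩ p (by simp)
    linarith
  have hF1 : ∀ i, U i < U p → r i = 0 := by
    intro i hi
    have hmem' : i ∈ l := hmem i
    rw [hldec] at hmem'
    rcases List.mem_append.mp hmem' with h1 | h2
    · exact hl₁z i h1
    · rcases List.mem_cons.mp h2 with rfl | h3
      · exact absurd hi (lt_irrefl _)
      · exact absurd hi (not_lt.mpr (hUl₂ i h3))
  have hF2' : ∀ i, U p < U i → r i = q₀ i := by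
    intro i hi
    have hmem' : i ∈ l := hmem i
    rw [hldec] at hmem'
    rcases List.mem_append.mp hmem' with h1 | h2
    · exact absurd hi (not_lt.mpr (hUl₁ i h1))
    · rcases List.mem_cons.mp h2 with rfl | h3
      · exact absurd hi (lt_irrefl _)
      · exact hF2 i h3
  set t : ℝ := U p with ht
  set g : Fin m → ℝ := fun i => max (U i - t) 0 with hgdef
  have hgi : ∀ i, g i = max (U i - t) 0 := fun i => rfl
  have hg0 : ∀ i, 0 ≤ g i := fun i => le_max_right _ _
  have hgle : ∀ i, U i - t ≤ g i := fun i => le_max_left _ _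
  have htj : t ≤ U j := hj p
  set pos : Fin m → ℝ := fun i => max (Pt i - Phat i) 0 with hposdef
  have hposi : ∀ i, pos i = max (Pt i - Phat i) 0 := fun i => rfl
  have hpos0 : ∀ i, 0 ≤ pos i := fun i => le_max_right _ _
  have hposle : ∀ i, Pt i - Phat i ≤ pos i := fun i => le_max_left _ _
  have hposPt : ∀ i, pos i ≤ Pt i := fun i => max_le (by linarith [hP0 i]) (hPt0 i)
  have hpos_sum : ∑ i, pos i ≤ εp / 2 := by
    have hsum2 : 2 * ∑ i, pos i = ∑ i, |Pt i - Phat i| + ∑ i, (Pt i - Phat i) := by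
      rw [Finset.mul_sum, ← Finset.sum_add_distrib]
      exact Finset.sum_congr rfl (fun i _ => (two_max_aux _).symm)
    have hz : ∑ i, (Pt i - Phat i) = 0 := by
      rw [Finset.sum_sub_distrib, hPt1, hP1]; ring
    linarith
  have hK : (∑ i ∈ Finset.univ.erase j, pos i) + (Pt j - Phat j) ≤ δ := by
    have hAe : pos j + ∑ i ∈ Finset.univ.erase j, pos i = ∑ i, pos i :=
      Finset.add_sum_erase Finset.univ pos (Finset.mem_univ j)
    have hA : (∑ i ∈ Finset.univ.erase j, pos i) + (Pt j - Phat j) ≤ εp / 2 := by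
      have := hposle j; linarith
    have hB : (∑ i ∈ Finset.univ.erase j, pos i) + (Pt j - Phat j) ≤ 1 - Phat j := by
      have h1 : ∑ i ∈ Finset.univ.erase j, pos i ≤ ∑ i ∈ Finset.univ.erase j, Pt i :=
        Finset.sum_le_sum (fun i _ => hposPt i)
      have h2 : Pt j + ∑ i ∈ Finset.univ.erase j, Pt i = 1 := by
        rw [Finset.add_sum_erase Finset.univ Pt (Finset.mem_univ j)]; exact hPt1
      linarith
    have hgoal : (∑ i ∈ Finset.univ.erase j, pos i) + (Pt j - Phat j) + Phat j
        ≤ min 1 (Phat j + εp / 2) :=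
      le_min (by linarith) (by linarith)
    rw [hδdef]
    linarith
  have hrg : ∀ i, r i * (U i - t) = r i * g i := by
    intro i
    rcases le_or_gt t (U i) with h | h
    · rw [hgi i, max_eq_left (by linarith)]
    · rw [hF1 i h, zero_mul, zero_mul]
  have hmain : ∑ i, Pt i * g i ≤ ∑ i, r i * g i := by
    rcases le_or_gt (U j) t with hcase | hcase
    · have hz : ∀ i, g i = 0 := fun i => by
        rw [hgi i]; exact max_eq_right (by linarith [hj i])
      have h1 : ∑ i, Pt i * g i = 0 :=
        Finset.sum_eq_zero (fun i _ => by rw [hz i, mul_zero])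
      have h2 : ∑ i, r i * g i = 0 :=
        Finset.sum_eq_zero (fun i _ => by rw [hz i, mul_zero])
      rw [h1, h2]
    · have hrj : r j = Phat j + δ := by rw [hF2' j hcase, hq₀j]
      have hterm : ∀ i ∈ Finset.univ.erase j, (Pt i - r i) * g i ≤ pos i * (U j - t) := by
        intro i hi
        have hij : i ≠ j := Finset.ne_of_mem_erase hi
        rcases le_or_gt (U i) t with h | h
        · have hgz : g i = 0 := by rw [hgi i]; exact max_eq_right (by linarith)
          rw [hgz, mul_zero]
          exact mul_nonneg (hpos0 i) (by linarith)
        · have hgi' : g i = U i - t := by rw [hgi i]; exact max_eq_left (by linarith)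
          have hri : r i = Phat i := by rw [hF2' i h, hq₀ne i hij]
          rw [hri, hgi']
          have h1 : (Pt i - Phat i) * (U i - t) ≤ pos i * (U i - t) :=
            mul_le_mul_of_nonneg_right (hposle i) (by linarith)
          have h2 : pos i * (U i - t) ≤ pos i * (U j - t) :=
            mul_le_mul_of_nonneg_left (by linarith [hj i]) (hpos0 i)
          linarith
      have hgj : g j = U j - t := by rw [hgi j]; exact max_eq_left (by linarith)
      have hsplit : ∑ i, (Pt i - r i) * g i
          = (Pt j - r j) * g j + ∑ i ∈ Finset.univ.erase j, (Pt i - r i) * g i :=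
        (Finset.add_sum_erase Finset.univ (fun i => (Pt i - r i) * g i)
          (Finset.mem_univ j)).symm
      have hsum_le : ∑ i ∈ Finset.univ.erase j, (Pt i - r i) * g i
          ≤ (∑ i ∈ Finset.univ.erase j, pos i) * (U j - t) := by
        rw [Finset.sum_mul]
        exact Finset.sum_le_sum hterm
      have hjterm : (Pt j - r j) * g j = (Pt j - Phat j - δ) * (U j - t) := by
        rw [hrj, hgj]; ring
      have hfac : (∑ i ∈ Finset.univ.erase j, pos i) + (Pt j - Phat j - δ) ≤ 0 := by
        linarith
      have hUjt : (0 : ℝ) ≤ U j - t := by linarith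
      have hprod : ((∑ i ∈ Finset.univ.erase j, pos i) + (Pt j - Phat j - δ)) * (U j - t) ≤ 0 :=
        (mul_le_mul_of_nonneg_right hfac hUjt).trans_eq (zero_mul _)
      have htot : ∑ i, (Pt i - r i) * g i ≤ 0 := by
        rw [hsplit, hjterm]
        nlinarith [hsum_le, hprod]
      have hdist : ∑ i, (Pt i - r i) * g i = ∑ i, Pt i * g i - ∑ i, r i * g i := by
        rw [← Finset.sum_sub_distrib]
        exact Finset.sum_congr rfl (fun i _ => by ring)
      linarith
  have e1 : ∑ i, Pt i * U i = ∑ i, Pt i * (U i - t) + t := by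
    have h : ∑ i, Pt i * U i - ∑ i, Pt i * (U i - t) = t := by
      rw [← Finset.sum_sub_distrib]
      have hc : ∀ i ∈ Finset.univ, Pt i * U i - Pt i * (U i - t) = Pt i * t :=
        fun i _ => by ring
      rw [Finset.sum_congr rfl hc, ← Finset.sum_mul, hPt1, one_mul]
    linarith
  have e2 : ∑ i, r i * U i = ∑ i, r i * (U i - t) + t := by
    have h : ∑ i, r i * U i - ∑ i, r i * (U i - t) = t := by
      rw [← Finset.sum_sub_distrib]
      have hc : ∀ i ∈ Finset.univ, r i * U i - r i * (U i - t) = r i * t :=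
        fun i _ => by ring
      rw [Finset.sum_congr rfl hc, ← Finset.sum_mul, hr1, one_mul]
    linarith
  have e3 : ∑ i, Pt i * (U i - t) ≤ ∑ i, Pt i * g i :=
    Finset.sum_le_sum (fun i _ => mul_le_mul_of_nonneg_left (hgle i) (hPt0 i))
  have e4 : ∑ i, r i * (U i - t) = ∑ i, r i * g i :=
    Finset.sum_congr rfl (fun i _ => hrg i)
  linarith
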